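/- Hyperbolicity is a quasi-isometry invariant: if G and H are connected locally finite graphs, G is δ-hyperbolic for some δ ≥ 0, and G is quasi-isometric to H, then H is δ'-hyperbolic for some δ' ≥ 0 depending only on δ and the quasi-isometry constants. -/

import Mathlib

/-- `φ` is a `(γ, c)`-quasi-isometry from `G` to `H`. -/
def SimpleGraph.IsQuasiIsometry {V W : Type} (G : SimpleGraph V) (H : SimpleGraph W)
    (φ : V → W) (γ c : ℝ) : Prop :=
  1 ≤ γ ∧ 0 ≤ c ∧
    (∀ u v : V,
      γ⁻¹ * (G.dist u v : ℝ) - c ≤ (H.dist (φ u) (φ v) : ℝ) ∧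
      (H.dist (φ u) (φ v) : ℝ) ≤ γ * (G.dist u v : ℝ) + c) ∧
    ∀ w : W, ∃ v : V, (H.dist w (φ v) : ℝ) ≤ c

/-- `G` is `δ`-hyperbolic: every side of a geodesic triangle lies within
distance `δ` of the union of the other two sides. -/
def SimpleGraph.IsDeltaHyperbolic {V : Type} (G : SimpleGraph V) (δ : ℝ) : Prop :=
  ∀ (x y z : V) (p1 : G.Walk x y) (p2 : G.Walk y z) (p3 : G.Walk x z),
    p1.length = G.dist x y → p2.length = G.dist y z → p3.length = G.dist x z →
    ∀ v ∈ p1.support, ∃ w : V, (w ∈ p2.support ∨ w ∈ p3.support) ∧ (G.dist v w : ℝ) ≤ δ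

open SimpleGraph

variable {V : Type} {G : SimpleGraph V}

namespace QIH


/-- Split a walk at position `n`. -/
lemma walk_split {a b : V} (p : G.Walk a b) (n : ℕ) (hn : n ≤ p.length) :
    ∃ (m : V) (p1 : G.Walk a m) (p2 : G.Walk m b),
      p1.length = n ∧ p1.length + p2.length = p.length ∧ p1.append p2 = p := by
  induction p generalizing n with
  | nil =>
    refine ⟨_, Walk.nil, Walk.nil, ?_, by simp, by simp⟩
    simpa using (Nat.le_zero.mp (by simpa using hn)).symm
  | @cons u x b h q ih =>
    match n with
    | 0 => exact ⟨u, Walk.nil, Walk.cons h q, rfl, by simp, by simp⟩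
    | n + 1 =>
      obtain ⟨m, p1, p2, h1, h2, h3⟩ := ih n (by simpa using hn)
      exact ⟨m, Walk.cons h p1, p2, by simp [h1], by simp [← h2]; omega, by simp [h3]⟩

lemma geodesic_split (hconn : G.Connected) {a b m : V} (p1 : G.Walk a m) (p2 : G.Walk m b)
    (h : (p1.append p2).length = G.dist a b) :
    p1.length = G.dist a m ∧ p2.length = G.dist m b := by
  have h1 : G.dist a m ≤ p1.length := dist_le _
  have h2 : G.dist m b ≤ p2.length := dist_le _
  have h3 := hconn.dist_triangle (u := a) (v := m) (w := b)
  rw [Walk.length_append] at h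
  omega

lemma diverge (hconn : G.Connected) {δ : ℝ} (hδ : 0 ≤ δ) (hyp : G.IsDeltaHyperbolic δ) :
    ∀ (k : ℕ) {a b : V} (p g : G.Walk a b), g.length = G.dist a b → p.length ≤ 2 ^ k →
      ∀ v ∈ g.support, ∃ u ∈ p.support, (G.dist v u : ℝ) ≤ δ * k + 1 := by
  intro k
  induction k with
  | zero =>
    intro a b p g hg hp v hv
    obtain ⟨t, ht, htle⟩ := Walk.mem_support_iff_exists_getVert.mp hv
    have hgl : g.length ≤ 1 := by
      rw [hg]; exact le_trans (dist_le p) (by simpa using hp)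
    have ht1 : t ≤ 1 := le_trans htle hgl
    interval_cases t
    · exact ⟨a, p.start_mem_support, by simp [← ht, Walk.getVert_zero, SimpleGraph.dist_self]⟩
    · have h1 : g.length = 1 := by omega
      have : v = b := by rw [← ht, ← h1, Walk.getVert_length]
      exact ⟨b, p.end_mem_support, by simp [this, SimpleGraph.dist_self]⟩
  | succ k ih =>
    intro a b p g hg hp v hv
    obtain ⟨m, p1, p2, hl1, hl2, happ⟩ := walk_split p (min p.length (2 ^ k)) (Nat.min_le_left _ _)
    obtain ⟨g3, hg3⟩ := hconn.exists_walk_length_eq_dist a m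
    obtain ⟨g2, hg2⟩ := hconn.exists_walk_length_eq_dist b m
    obtain ⟨w, hw, hvw⟩ := hyp a b m g g2 g3 hg hg2 hg3 v hv
    have hp1 : p1.length ≤ 2 ^ k := by omega
    have hp2 : p2.length ≤ 2 ^ k := by
      rcases le_total p.length (2 ^ k) with h | h <;> simp [Nat.min_eq_left, Nat.min_eq_right, h] at hl1 <;>
        [skip; skip] <;> omega
    rcases hw with hw | hw
    · obtain ⟨u, hu, hwu⟩ := ih p2.reverse g2 hg2 (by simpa using hp2) w hw
      refine ⟨u, ?_, ?_⟩
      · rw [← happ]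
        exact Walk.subset_support_append_right _ _ (by simpa [Walk.support_reverse] using hu)
      · have htri := hconn.dist_triangle (u := v) (v := w) (w := u)
        have : (G.dist v u : ℝ) ≤ (G.dist v w : ℝ) + G.dist w u := by exact_mod_cast htri
        push_cast
        linarith
    · obtain ⟨u, hu, hwu⟩ := ih p1 g3 hg3 hp1 w hw
      refine ⟨u, ?_, ?_⟩
      · rw [← happ]; exact Walk.subset_support_append_left _ _ hu
      · have htri := hconn.dist_triangle (u := v) (v := w) (w := u)
        have : (G.dist v u : ℝ) ≤ (G.dist v w : ℝ) + G.dist w u := by exact_mod_cast htri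
        push_cast
        linarith



lemma chain (hconn : G.Connected) (q : ℕ → V) (S : ℕ) :
    ∀ (d i : ℕ), (∀ t, i ≤ t → t < i + d → G.dist (q t) (q (t + 1)) ≤ S) →
      ∃ w : G.Walk (q i) (q (i + d)), w.length ≤ d * S ∧
        ∀ u ∈ w.support, ∃ t, i ≤ t ∧ t ≤ i + d ∧ G.dist u (q t) ≤ S := by
  intro d
  induction d with
  | zero =>
    intro i _
    exact ⟨Walk.nil, by simp, fun u hu => ⟨i, le_rfl, by simp,
      by simp at hu; simp [hu, SimpleGraph.dist_self]⟩⟩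
  | succ d ih =>
    intro i hstep
    obtain ⟨e, he⟩ := hconn.exists_walk_length_eq_dist (q i) (q (i + 1))
    obtain ⟨w, hw1, hw2⟩ := ih (i + 1) (fun t h1 h2 => hstep t (by omega) (by omega))
    refine ⟨(e.append w).copy rfl (congrArg q (by omega)), ?_, ?_⟩
    · rw [Walk.length_copy, Walk.length_append]
      have : e.length ≤ S := by rw [he]; exact hstep i le_rfl (by omega)
      calc e.length + w.length ≤ S + d * S := by omega
        _ = (d + 1) * S := by ring
    · intro u hu
      rw [Walk.support_copy, Walk.mem_support_append_iff] at hu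
      rcases hu with hu | hu
      · have := Classical.decEq V
        refine ⟨i, le_rfl, by omega, ?_⟩
        rw [SimpleGraph.dist_comm]
        calc G.dist (q i) u ≤ (e.takeUntil u hu).length := dist_le _
          _ ≤ e.length := Walk.length_takeUntil_le e hu
          _ ≤ S := by rw [he]; exact hstep i le_rfl (by omega)
      · obtain ⟨t, ht1, ht2, ht3⟩ := hw2 u hu
        exact ⟨t, by omega, by omega, ht3⟩

lemma two_pow_half : ∀ k : ℕ, k ≤ 2 ^ ((k + 1) / 2) := by
  intro k
  induction k using Nat.strong_induction_on with
  | _ k ih =>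
    match k with
    | 0 => simp
    | 1 => norm_num
    | 2 => norm_num
    | (k + 3) =>
      have h1 : k + 1 ≤ 2 ^ ((k + 2) / 2) := ih (k + 1) (by omega)
      have h2 : (k + 4) / 2 = (k + 2) / 2 + 1 := by omega
      have h3 : (2 : ℕ) ≤ 2 ^ ((k + 2) / 2) := by
        calc (2:ℕ) = 2 ^ 1 := by norm_num
          _ ≤ 2 ^ ((k + 2) / 2) := Nat.pow_le_pow_right (by norm_num) (by omega)
      calc k + 3 ≤ 2 ^ ((k + 2) / 2) + 2 ^ ((k + 2) / 2) := by omega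
        _ = 2 ^ ((k + 2) / 2 + 1) := by ring
        _ = 2 ^ ((k + 3 + 1) / 2) := by rw [h2]

lemma bound_D {D N A B S : ℕ} (hB : 2 ≤ B)
    (h : D ≤ N * Nat.clog 2 (A * D + B) + 1 + S) :
    D ≤ (N + 1 + S) * (2 * (A * (N + 1 + S) + B) + 3) := by
  set N' := N + 1 + S with hN'
  set k := Nat.clog 2 (A * D + B) with hkdef
  have hk1 : 1 ≤ k := Nat.clog_pos one_lt_two (by omega)
  have hDk : D ≤ N' * k := by
    have h5 : 1 + S ≤ (1 + S) * k := Nat.le_mul_of_pos_right _ hk1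
    have h6 : N' * k = N * k + (1 + S) * k := by rw [hN']; ring
    omega
  have hpow : 2 ^ (k - 1) < A * D + B := Nat.pow_pred_clog_lt_self one_lt_two (by omega)
  have hBk : B ≤ B * k := Nat.le_mul_of_pos_right _ hk1
  have h2 : A * D + B ≤ (A * N' + B) * k := by
    have h7 : A * D ≤ A * (N' * k) := Nat.mul_le_mul_left _ hDk
    have h8 : (A * N' + B) * k = A * (N' * k) + B * k := by ring
    omega
  set Cc := A * N' + B with hCc
  have hCc2 : 2 ≤ Cc := by
    have : B ≤ Cc := by rw [hCc]; omega
    omega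
  have hCk : 2 ^ (k - 1) < Cc * k := lt_of_lt_of_le hpow h2
  have hkb : k ≤ 2 * Cc + 3 := by
    by_cases h3 : k ≤ 2
    · omega
    · set hf := (k + 1) / 2 with hh
      set m := k - 1 - hf with hm
      have hsplit : k - 1 = hf + m := by omega
      have hpowsplit : 2 ^ (k - 1) = 2 ^ hf * 2 ^ m := by rw [hsplit, pow_add]
      have hkh : k ≤ 2 ^ hf := two_pow_half k
      have hlt : 2 ^ hf * 2 ^ m < Cc * 2 ^ hf :=
        lt_of_lt_of_le (hpowsplit ▸ hCk) (Nat.mul_le_mul_left _ hkh)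
      have hmCc : 2 ^ m < Cc := by
        have h9 : 2 ^ hf * 2 ^ m < 2 ^ hf * Cc := by
          rw [mul_comm Cc (2 ^ hf)] at hlt; exact hlt
        exact Nat.lt_of_mul_lt_mul_left h9
      have hm2 : m < 2 ^ m := Nat.lt_two_pow_self (n := m)
      omega
  calc D ≤ N' * k := hDk
    _ ≤ N' * (2 * Cc + 3) := Nat.mul_le_mul_left _ hkb



def morseB (N Γ C₂ S : ℕ) : ℕ :=
  (N + 1 + S) * (2 * ((2 + 6 * Γ * S) * (N + 1 + S) + (C₂ * S + 2)) + 3)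

lemma geodesic_point (hconn : G.Connected) {a b : V} (p : G.Walk a b)
    (hp : p.length = G.dist a b) {u : V} (hu : u ∈ p.support) :
    G.dist a u + G.dist u b = G.dist a b := by
  classical
  have hspec := p.take_spec hu
  have h := geodesic_split hconn (p.takeUntil u hu) (p.dropUntil u hu) (by rw [hspec]; exact hp)
  have hlen : (p.takeUntil u hu).length + (p.dropUntil u hu).length = p.length := by
    conv_rhs => rw [← hspec]
    rw [Walk.length_append]
  omega

lemma morse1 (hconn : G.Connected) {δ : ℝ} (hδ : 0 ≤ δ) (hyp : G.IsDeltaHyperbolic δ)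
    {N Γ C₂ S : ℕ} (hN : δ ≤ N) (q : ℕ → V) (n : ℕ)
    (hlow : ∀ i j, i ≤ j → j ≤ n → j - i ≤ Γ * G.dist (q i) (q j) + C₂)
    (hstep : ∀ i, i < n → G.dist (q i) (q (i + 1)) ≤ S)
    (g : G.Walk (q 0) (q n)) (hg : g.length = G.dist (q 0) (q n)) :
    ∀ v ∈ g.support, ∃ i, i ≤ n ∧ G.dist v (q i) ≤ morseB N Γ C₂ S := by
  classical
  set L := g.length with hLdef
  have hqn : ∀ v : V, ((Finset.range (n + 1)).image fun i => G.dist v (q i)).Nonempty :=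
    fun v => Finset.Nonempty.image ⟨0, Finset.mem_range.mpr (by omega)⟩ _
  set mv : V → ℕ := fun v => ((Finset.range (n + 1)).image fun i => G.dist v (q i)).min' (hqn v)
    with hmvdef
  have hmv_le : ∀ (v : V) (i : ℕ), i ≤ n → mv v ≤ G.dist v (q i) := by
    intro v i hi
    simp only [hmvdef]
    exact Finset.min'_le ((Finset.range (n + 1)).image fun i => G.dist v (q i)) _
      (Finset.mem_image_of_mem _ (Finset.mem_range.mpr (show i < n + 1 by omega)))
  have hmv_ex : ∀ v : V, ∃ i, i ≤ n ∧ G.dist v (q i) = mv v := by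
    intro v
    obtain ⟨i, hi, hie⟩ := Finset.mem_image.mp (Finset.min'_mem _ (hqn v))
    exact ⟨i, by have := Finset.mem_range.mp hi; omega, hie⟩
  have hDne : ((Finset.range (L + 1)).image fun t => mv (g.getVert t)).Nonempty :=
    Finset.Nonempty.image ⟨0, Finset.mem_range.mpr (by omega)⟩ _
  set D := ((Finset.range (L + 1)).image fun t => mv (g.getVert t)).max' hDne with hDdef
  have hD_ge : ∀ t, t ≤ L → mv (g.getVert t) ≤ D := by
    intro t ht
    rw [hDdef]
    exact Finset.le_max' ((Finset.range (L + 1)).image fun t => mv (g.getVert t)) _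
      (Finset.mem_image_of_mem _ (Finset.mem_range.mpr (show t < L + 1 by omega)))
  obtain ⟨ts, htsL, htseq⟩ : ∃ t, t ≤ L ∧ mv (g.getVert t) = D := by
    rw [hDdef]
    obtain ⟨t, ht, hte⟩ := Finset.mem_image.mp (Finset.max'_mem _ hDne)
    refine ⟨t, ?_, hte⟩
    have := Finset.mem_range.mp ht
    omega
  have hDv : ∀ v ∈ g.support, mv v ≤ D := by
    intro v hv
    obtain ⟨t, ht, htle⟩ := Walk.mem_support_iff_exists_getVert.mp hv
    exact ht ▸ hD_ge t htle
  suffices hDB : D ≤ morseB N Γ C₂ S by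
    intro v hv
    obtain ⟨i, hi, hie⟩ := hmv_ex v
    exact ⟨i, hi, by rw [hie]; exact le_trans (hDv v hv) hDB⟩
  set vs := g.getVert ts with hvsdef
  set tm := ts - 2 * D with htmdef
  set tp := min (ts + 2 * D) L with htpdef
  have htmtp : tm ≤ ts ∧ ts ≤ tp ∧ tp ≤ L ∧ ts - tm ≤ 2 * D ∧ tp - ts ≤ 2 * D := by omega
  obtain ⟨wm, A1, R, hA1len, hsum1, happ1⟩ := walk_split g tm (by omega)
  obtain ⟨h_dA1, h_dR⟩ := geodesic_split hconn A1 R (by rw [happ1]; exact hg)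
  obtain ⟨vs', M1, R2, hM1len, hsum2, happ2⟩ := walk_split R (ts - tm) (by omega)
  have hvs' : vs' = vs := by
    have h1 : g.getVert ts = R.getVert (ts - tm) := by
      conv_lhs => rw [← happ1]
      rw [Walk.getVert_append, hA1len, if_neg (show ¬ ts < tm by omega)]
    have h2 : R.getVert (ts - tm) = vs' := by
      conv_lhs => rw [← happ2]
      rw [Walk.getVert_append, hM1len, if_neg (show ¬ ts - tm < ts - tm by omega)]
      simp [Walk.getVert_zero]
    rw [← h2, ← h1, hvsdef]
  subst hvs'
  obtain ⟨h_dM1, h_dR2⟩ := geodesic_split hconn M1 R2 (by rw [happ2]; exact h_dR)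
  obtain ⟨wp, M2, T, hM2len, hsum3, happ3⟩ := walk_split R2 (tp - ts) (by omega)
  obtain ⟨h_dM2, h_dT⟩ := geodesic_split hconn M2 T (by rw [happ3]; exact h_dR2)
  have hwm_mem : wm ∈ g.support := by
    rw [← happ1]
    exact (Walk.mem_support_append_iff _ _).mpr (Or.inl A1.end_mem_support)
  have hwp_mem : wp ∈ g.support := by
    rw [← happ1]
    refine (Walk.mem_support_append_iff _ _).mpr (Or.inr ?_)
    rw [← happ2]
    refine (Walk.mem_support_append_iff _ _).mpr (Or.inr ?_)
    rw [← happ3]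
    exact (Walk.mem_support_append_iff _ _).mpr (Or.inl M2.end_mem_support)
  have dmw : G.dist wm wp = (ts - tm) + (tp - ts) := by
    have hle := dist_le (M1.append M2)
    rw [Walk.length_append] at hle
    have htr := hconn.dist_triangle (u := wm) (v := wp) (w := q n)
    omega
  have hg' : (M1.append M2).length = G.dist wm wp := by
    rw [Walk.length_append]; omega
  have hvsmem : vs ∈ (M1.append M2).support :=
    (Walk.mem_support_append_iff _ _).mpr (Or.inl M1.end_mem_support)
  obtain ⟨im, him, hlm, hKm⟩ :
      ∃ i, i ≤ n ∧ G.dist wm (q i) ≤ D ∧ (G.dist wm (q i) = 0 ∨ G.dist vs wm = 2 * D) := by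
    by_cases hcase : 2 * D ≤ ts
    · obtain ⟨i, hi, hie⟩ := hmv_ex wm
      refine ⟨i, hi, by rw [hie]; exact hDv wm hwm_mem, Or.inr ?_⟩
      rw [SimpleGraph.dist_comm]
      omega
    · have hwm0 : wm = q 0 := by
        have h0 : G.dist (q 0) wm = 0 := by omega
        exact ((hconn.dist_eq_zero_iff).mp h0).symm
      exact ⟨0, by omega, by rw [hwm0]; simp [SimpleGraph.dist_self],
        Or.inl (by rw [hwm0]; simp [SimpleGraph.dist_self])⟩
  obtain ⟨ip, hip, hlp, hKp⟩ :
      ∃ i, i ≤ n ∧ G.dist wp (q i) ≤ D ∧ (G.dist wp (q i) = 0 ∨ G.dist vs wp = 2 * D) := by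
    by_cases hcase : ts + 2 * D ≤ L
    · obtain ⟨i, hi, hie⟩ := hmv_ex wp
      exact ⟨i, hi, by rw [hie]; exact hDv wp hwp_mem, Or.inr (by omega)⟩
    · have hwpn : wp = q n := by
        have h0 : G.dist wp (q n) = 0 := by omega
        exact (hconn.dist_eq_zero_iff).mp h0
      exact ⟨n, le_rfl, by rw [hwpn]; simp [SimpleGraph.dist_self],
        Or.inl (by rw [hwpn]; simp [SimpleGraph.dist_self])⟩
  have hqq : G.dist (q im) (q ip) ≤ 6 * D := by
    have t1 := hconn.dist_triangle (u := q im) (v := wm) (w := q ip)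
    have t2 := hconn.dist_triangle (u := wm) (v := wp) (w := q ip)
    have e1 : G.dist (q im) wm = G.dist wm (q im) := SimpleGraph.dist_comm
    have e2 : G.dist wp (q ip) ≤ D := hlp
    omega
  obtain ⟨Q, hQlen, hQsupp⟩ : ∃ Q : G.Walk (q im) (q ip),
      Q.length ≤ (Γ * (6 * D) + C₂) * S ∧
      ∀ u ∈ Q.support, ∃ t, t ≤ n ∧ G.dist u (q t) ≤ S := by
    rcases le_total im ip with hor | hor
    · obtain ⟨w, hw1, hw2⟩ := chain hconn q S (ip - im) im
        (fun t h1 h2 => hstep t (by omega))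
      refine ⟨w.copy rfl (congrArg q (by omega)), ?_, ?_⟩
      · rw [Walk.length_copy]
        refine le_trans hw1 (Nat.mul_le_mul_right _ ?_)
        have h5 := hlow im ip hor hip
        have h6 : Γ * G.dist (q im) (q ip) ≤ Γ * (6 * D) := Nat.mul_le_mul_left Γ hqq
        omega
      · intro u hu
        rw [Walk.support_copy] at hu
        obtain ⟨t, h1, h2, h3⟩ := hw2 u hu
        exact ⟨t, by omega, h3⟩
    · obtain ⟨w, hw1, hw2⟩ := chain hconn q S (im - ip) ip
        (fun t h1 h2 => hstep t (by omega))
      refine ⟨(w.copy rfl (congrArg q (by omega))).reverse, ?_, ?_⟩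
      · rw [Walk.length_reverse, Walk.length_copy]
        refine le_trans hw1 (Nat.mul_le_mul_right _ ?_)
        have h5 := hlow ip im hor him
        have hd : G.dist (q ip) (q im) = G.dist (q im) (q ip) := SimpleGraph.dist_comm
        rw [hd] at h5
        have h6 : Γ * G.dist (q im) (q ip) ≤ Γ * (6 * D) := Nat.mul_le_mul_left Γ hqq
        omega
      · intro u hu
        rw [Walk.support_reverse, List.mem_reverse, Walk.support_copy] at hu
        obtain ⟨t, h1, h2, h3⟩ := hw2 u hu
        exact ⟨t, by omega, h3⟩
  obtain ⟨cm, hcm⟩ := hconn.exists_walk_length_eq_dist wm (q im)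
  obtain ⟨cp, hcp⟩ := hconn.exists_walk_length_eq_dist (q ip) wp
  set σ := cm.append (Q.append cp) with hσdef
  have hσlen : σ.length ≤ (2 + 6 * Γ * S) * D + (C₂ * S + 2) := by
    rw [hσdef, Walk.length_append, Walk.length_append, hcm, hcp]
    have h1 : G.dist wm (q im) ≤ D := hlm
    have h2 : G.dist (q ip) wp ≤ D := by rw [SimpleGraph.dist_comm]; exact hlp
    have h3 : (Γ * (6 * D) + C₂) * S = 6 * (Γ * S * D) + C₂ * S := by ring
    have h4 : (2 + 6 * Γ * S) * D + (C₂ * S + 2) = 2 * D + 6 * (Γ * S * D) + C₂ * S + 2 := by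
      ring
    omega
  set A := 2 + 6 * Γ * S with hAdef
  set B := C₂ * S + 2 with hBdef
  set k := Nat.clog 2 (A * D + B) with hkdef
  have hσ2k : σ.length ≤ 2 ^ k := le_trans hσlen (Nat.le_pow_clog one_lt_two _)
  obtain ⟨u, hu, hvu⟩ := diverge hconn hδ hyp k σ (M1.append M2) hg' hσ2k vs hvsmem
  have hlb : ∀ u' ∈ σ.support, D ≤ G.dist vs u' + S := by
    intro u' hu'
    rw [hσdef, Walk.mem_support_append_iff _ _, Walk.mem_support_append_iff _ _] at hu'
    have hDts : mv vs ≤ G.dist vs (q im) → True := fun _ => trivial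
    rcases hu' with hu' | hu' | hu'
    · have hpt := geodesic_point hconn cm hcm hu'
      have t2 : G.dist vs (q im) ≤ G.dist vs u' + G.dist u' (q im) := hconn.dist_triangle
      have h2 : D ≤ G.dist vs (q im) := by
        have := hmv_le vs im him; omega
      rcases hKm with hK | hK
      · omega
      · have t1 : G.dist vs wm ≤ G.dist vs u' + G.dist u' wm := hconn.dist_triangle
        have e1 : G.dist u' wm = G.dist wm u' := SimpleGraph.dist_comm
        omega
    · obtain ⟨t, htn, hut⟩ := hQsupp u' hu'
      have h2 : D ≤ G.dist vs (q t) := by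
        have := hmv_le vs t htn; omega
      have t1 : G.dist vs (q t) ≤ G.dist vs u' + G.dist u' (q t) := hconn.dist_triangle
      have e1 : G.dist u' (q t) = G.dist (q t) u' := SimpleGraph.dist_comm
      have e2 : G.dist u' (q t) ≤ S := hut
      omega
    · have hpt := geodesic_point hconn cp hcp hu'
      have t2 : G.dist vs (q ip) ≤ G.dist vs u' + G.dist u' (q ip) := hconn.dist_triangle
      have e2 : G.dist u' (q ip) = G.dist (q ip) u' := SimpleGraph.dist_comm
      have e3 : G.dist wp (q ip) = G.dist (q ip) wp := SimpleGraph.dist_comm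
      have h2 : D ≤ G.dist vs (q ip) := by
        have := hmv_le vs ip hip; omega
      rcases hKp with hK | hK
      · omega
      · have t1 : G.dist vs wp ≤ G.dist vs u' + G.dist u' wp := hconn.dist_triangle
        omega
  have hfin : D ≤ N * k + 1 + S := by
    have h1 : D ≤ G.dist vs u + S := hlb u hu
    have h4 : (D : ℝ) ≤ (G.dist vs u : ℝ) + S := by exact_mod_cast h1
    have h5 : δ * k ≤ (N : ℝ) * k := mul_le_mul_of_nonneg_right hN (Nat.cast_nonneg k)
    have h3 : (D : ℝ) ≤ ((N * k + 1 + S : ℕ) : ℝ) := by push_cast; linarith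
    exact_mod_cast h3
  rw [hkdef] at hfin
  have := bound_D (show 2 ≤ B by omega) hfin
  rw [hAdef, hBdef] at this
  exact this

lemma geodesic_getVert_dist (hconn : G.Connected) {a b : V} (p : G.Walk a b)
    (hp : p.length = G.dist a b) (i j : ℕ) (hij : i ≤ j) (hj : j ≤ p.length) :
    G.dist (p.getVert i) (p.getVert j) = j - i := by
  obtain ⟨m1, p1, p2, hl1, hsum1, happ1⟩ := walk_split p i (by omega)
  have hm1 : p.getVert i = m1 := by
    conv_lhs => rw [← happ1]
    rw [Walk.getVert_append, hl1, if_neg (show ¬ i < i by omega), Nat.sub_self, Walk.getVert_zero]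
  obtain ⟨hd1, hd2⟩ := geodesic_split hconn p1 p2 (by rw [happ1]; exact hp)
  obtain ⟨m2, p21, p22, hl2, hsum2, happ2⟩ := walk_split p2 (j - i) (by omega)
  have hm2 : p.getVert j = m2 := by
    conv_lhs => rw [← happ1]
    rw [Walk.getVert_append, hl1, if_neg (show ¬ j < i by omega)]
    conv_lhs => rw [← happ2]
    rw [Walk.getVert_append, hl2, if_neg (show ¬ j - i < j - i by omega), Nat.sub_self,
      Walk.getVert_zero]
  obtain ⟨hd21, hd22⟩ := geodesic_split hconn p21 p22 (by rw [happ2]; exact hd2)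
  rw [hm1, hm2]
  omega

def morseC (Γ Cu C₂ D₀ : ℕ) : ℕ := D₀ + Γ * (Γ * (2 * D₀ + 1) + C₂) + Cu + Γ * C₂

lemma morse2 (hconn : G.Connected) {Γ Cu C₂ D₀ : ℕ}
    (q : ℕ → V) (n : ℕ)
    (hup : ∀ i j, i ≤ j → j ≤ n → G.dist (q i) (q j) ≤ Γ * (j - i) + Cu)
    (hlow : ∀ i j, i ≤ j → j ≤ n → j - i ≤ Γ * G.dist (q i) (q j) + C₂)
    (g : G.Walk (q 0) (q n)) (hg : g.length = G.dist (q 0) (q n))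
    (hD0 : ∀ v ∈ g.support, ∃ i, i ≤ n ∧ G.dist v (q i) ≤ D₀) :
    ∀ i, i ≤ n → ∃ v ∈ g.support, G.dist (q i) v ≤ morseC Γ Cu C₂ D₀ := by
  classical
  intro i hi
  by_cases hL : g.length = 0
  · have h0 : G.dist (q 0) (q n) = 0 := by omega
    have h1 := hlow 0 n (Nat.zero_le n) le_rfl
    rw [h0, Nat.mul_zero] at h1
    refine ⟨q n, g.end_mem_support, ?_⟩
    have h2 := hup i n hi le_rfl
    have h3 : Γ * (n - i) ≤ Γ * C₂ := Nat.mul_le_mul_left Γ (by omega)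
    simp only [morseC]
    omega
  · set L := g.length with hLdef
    have hL1 : 1 ≤ L := by omega
    have hmem : ∀ t, t ≤ L → g.getVert t ∈ g.support := fun t ht =>
      Walk.mem_support_iff_exists_getVert.mpr ⟨t, rfl, ht⟩
    choose jc hjc1 hjc2 using fun t (ht : t ≤ L) => hD0 (g.getVert t) (hmem t ht)
    set j : ℕ → ℕ := fun t =>
      if ht : t ≤ L then (if t = 0 then 0 else if t = L then n else jc t ht) else n with hjdef
    have hjn : ∀ t, t ≤ L → j t ≤ n := by
      intro t ht
      simp only [hjdef]
      rw [dif_pos ht]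
      split_ifs with h0 hL'
      · omega
      · exact le_rfl
      · exact hjc1 t ht
    have hjd : ∀ t, t ≤ L → G.dist (g.getVert t) (q (j t)) ≤ D₀ := by
      intro t ht
      simp only [hjdef]
      rw [dif_pos ht]
      split_ifs with h0 hL'
      · subst h0
        simp [Walk.getVert_zero, SimpleGraph.dist_self]
      · subst hL'
        rw [hLdef, Walk.getVert_length]
        simp [SimpleGraph.dist_self]
      · exact hjc2 t ht
    have hj0 : j 0 = 0 := by
      simp only [hjdef]
      rw [dif_pos (Nat.zero_le L)]
      simp
    have hjL : j L = n := by
      simp only [hjdef]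
      rw [dif_pos le_rfl]
      rw [if_neg (show ¬ L = 0 by omega)]
      simp
    set M := Γ * (2 * D₀ + 1) + C₂ with hMdef
    have hstep2 : ∀ t, t < L → j (t + 1) ≤ j t + M ∧ j t ≤ j (t + 1) + M := by
      intro t ht
      have hadj := g.adj_getVert_succ (show t < g.length by omega)
      have h1 : G.dist (g.getVert t) (g.getVert (t + 1)) = 1 :=
        SimpleGraph.dist_eq_one_iff_adj.mpr hadj
      have h2 := hjd t (by omega)
      have h3 := hjd (t + 1) (by omega)
      have hq : G.dist (q (j t)) (q (j (t + 1))) ≤ 2 * D₀ + 1 := by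
        have t1 : G.dist (q (j t)) (q (j (t + 1))) ≤
            G.dist (q (j t)) (g.getVert t) + G.dist (g.getVert t) (q (j (t + 1))) :=
          hconn.dist_triangle
        have t2 : G.dist (g.getVert t) (q (j (t + 1))) ≤
            G.dist (g.getVert t) (g.getVert (t + 1)) + G.dist (g.getVert (t + 1)) (q (j (t + 1))) :=
          hconn.dist_triangle
        have e1 : G.dist (q (j t)) (g.getVert t) = G.dist (g.getVert t) (q (j t)) :=
          SimpleGraph.dist_comm
        omega
      have h6 : Γ * G.dist (q (j t)) (q (j (t + 1))) ≤ Γ * (2 * D₀ + 1) :=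
        Nat.mul_le_mul_left Γ hq
      constructor
      · rcases le_total (j t) (j (t + 1)) with h | h
        · have h7 := hlow (j t) (j (t + 1)) h (hjn (t + 1) (by omega))
          omega
        · omega
      · rcases le_total (j (t + 1)) (j t) with h | h
        · have h7 := hlow (j (t + 1)) (j t) h (hjn t (by omega))
          have e : G.dist (q (j (t + 1))) (q (j t)) = G.dist (q (j t)) (q (j (t + 1))) :=
            SimpleGraph.dist_comm
          rw [e] at h7
          omega
        · omega
    set P : ℕ → Prop := fun t => j t ≤ i with hPdef
    have hts : Nat.findGreatest P L ≤ L := Nat.findGreatest_le L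
    set tstar := Nat.findGreatest P L with htstardef
    have htsP : P tstar := Nat.findGreatest_spec (Nat.zero_le L) (show P 0 by simp [hPdef, hj0])
    have hjts : j tstar ≤ i := htsP
    have hiub : i ≤ j tstar + M := by
      by_cases hcase : tstar = L
      · rw [hcase]
        omega
      · have hlt : tstar < L := by omega
        have hgt : ¬ P (tstar + 1) :=
          Nat.findGreatest_is_greatest (n := L)
            (show Nat.findGreatest P L < tstar + 1 by omega) (by omega)
        have h1 : i < j (tstar + 1) := by
          simp only [hPdef] at hgt
          omega
        have h2 := (hstep2 tstar hlt).1
        omega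
    refine ⟨g.getVert tstar, hmem tstar hts, ?_⟩
    have hd1 : G.dist (g.getVert tstar) (q (j tstar)) ≤ D₀ := hjd tstar hts
    have hd2 : G.dist (q (j tstar)) (q i) ≤ Γ * M + Cu := by
      have h5 := hup (j tstar) i hjts hi
      have h6 : Γ * (i - j tstar) ≤ Γ * M := Nat.mul_le_mul_left Γ (by omega)
      omega
    have t1 : G.dist (q i) (g.getVert tstar) ≤
        G.dist (q i) (q (j tstar)) + G.dist (q (j tstar)) (g.getVert tstar) :=
      hconn.dist_triangle
    have e1 : G.dist (q i) (q (j tstar)) = G.dist (q (j tstar)) (q i) := SimpleGraph.dist_comm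
    have e2 : G.dist (q (j tstar)) (g.getVert tstar) = G.dist (g.getVert tstar) (q (j tstar)) :=
      SimpleGraph.dist_comm
    simp only [morseC]
    rw [← hMdef]
    omega
end QIH
noncomputable def DeltaQI (δ γ c : ℝ) : ℝ :=
  γ * ((QIH.morseC ⌈γ⌉₊ ⌈3 * γ * c⌉₊ ⌈3 * c⌉₊
      (QIH.morseB ⌈δ⌉₊ ⌈γ⌉₊ ⌈3 * c⌉₊ (⌈γ⌉₊ + ⌈3 * γ * c⌉₊)) : ℕ) + δ +
    ((QIH.morseB ⌈δ⌉₊ ⌈γ⌉₊ ⌈3 * c⌉₊ (⌈γ⌉₊ + ⌈3 * γ * c⌉₊) : ℕ) : ℝ)) + 3 * c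

/-- Hyperbolicity is a quasi-isometry invariant: there is a function `Δ` such that
whenever `G` is `δ`-hyperbolic and `(γ,c)`-quasi-isometric to `H` (both connected
and locally finite), `H` is `Δ δ γ c`-hyperbolic. -/
theorem hyperbolicity_quasiIsometry_invariant :
    ∃ Δ : ℝ → ℝ → ℝ → ℝ,
      ∀ (V W : Type) (G : SimpleGraph V) (H : SimpleGraph W),
        G.Connected → H.Connected →
        (∀ v, (G.neighborSet v).Finite) → (∀ v, (H.neighborSet v).Finite) →
        ∀ (δ γ c : ℝ) (φ : V → W), 0 ≤ δ →
          G.IsDeltaHyperbolic δ → G.IsQuasiIsometry H φ γ c →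
          0 ≤ Δ δ γ c ∧ H.IsDeltaHyperbolic (Δ δ γ c) := by
  classical
  refine ⟨DeltaQI, ?_⟩
  intro V W G H hG hH _ _ δ γ c φ hδ hypG hqi
  obtain ⟨hγ, hc, hqb, hsurj⟩ := hqi
  have hγ0 : (0 : ℝ) < γ := lt_of_lt_of_le one_pos hγ
  choose ψ hψ using hsurj
  set N := ⌈δ⌉₊ with hNdef
  set Γ := ⌈γ⌉₊ with hΓdef
  set Cu := ⌈3 * γ * c⌉₊ with hCudef
  set C₂ := ⌈3 * c⌉₊ with hC₂def
  set S := Γ + Cu with hSdef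
  set D₀ := QIH.morseB N Γ C₂ S with hD₀def
  set D₁ := QIH.morseC Γ Cu C₂ D₀ with hD₁def
  have hΔeq : DeltaQI δ γ c = γ * ((D₁ : ℝ) + δ + (D₀ : ℝ)) + 3 * c := by
    simp only [DeltaQI, hD₁def, hD₀def, hNdef, hΓdef, hCudef, hC₂def, hSdef]
  have fact_up : ∀ a b : W, (G.dist (ψ a) (ψ b) : ℝ) ≤ γ * (H.dist a b : ℝ) + 3 * γ * c := by
    intro a b
    have h1 := (hqb (ψ a) (ψ b)).1
    have u1 := hH.dist_triangle (u := φ (ψ a)) (v := a) (w := φ (ψ b))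
    have u2 := hH.dist_triangle (u := a) (v := b) (w := φ (ψ b))
    have t1 : (H.dist (φ (ψ a)) (φ (ψ b)) : ℝ) ≤
        (H.dist (φ (ψ a)) a : ℝ) + ((H.dist a b : ℝ) + (H.dist b (φ (ψ b)) : ℝ)) := by
      exact_mod_cast le_trans u1 (by omega)
    have hdaa : (H.dist (φ (ψ a)) a : ℝ) ≤ c := by
      have e : H.dist (φ (ψ a)) a = H.dist a (φ (ψ a)) := SimpleGraph.dist_comm
      rw [e]; exact hψ a
    have hdbb : (H.dist b (φ (ψ b)) : ℝ) ≤ c := hψ b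
    have h3 : γ⁻¹ * (G.dist (ψ a) (ψ b) : ℝ) ≤ (H.dist (φ (ψ a)) (φ (ψ b)) : ℝ) + c := by
      linarith
    have h2 : (G.dist (ψ a) (ψ b) : ℝ) ≤ γ * ((H.dist (φ (ψ a)) (φ (ψ b)) : ℝ) + c) := by
      have hne : γ ≠ 0 := ne_of_gt hγ0
      calc (G.dist (ψ a) (ψ b) : ℝ) = γ * (γ⁻¹ * (G.dist (ψ a) (ψ b) : ℝ)) := by
            field_simp
        _ ≤ γ * ((H.dist (φ (ψ a)) (φ (ψ b)) : ℝ) + c) :=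
            mul_le_mul_of_nonneg_left h3 (le_of_lt hγ0)
    have h4 : (H.dist (φ (ψ a)) (φ (ψ b)) : ℝ) + c ≤ (H.dist a b : ℝ) + 3 * c := by linarith
    calc (G.dist (ψ a) (ψ b) : ℝ) ≤ γ * ((H.dist (φ (ψ a)) (φ (ψ b)) : ℝ) + c) := h2
      _ ≤ γ * ((H.dist a b : ℝ) + 3 * c) := mul_le_mul_of_nonneg_left h4 (le_of_lt hγ0)
      _ = γ * (H.dist a b : ℝ) + 3 * γ * c := by ring
  have fact_low : ∀ a b : W, (H.dist a b : ℝ) ≤ γ * (G.dist (ψ a) (ψ b) : ℝ) + 3 * c := by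
    intro a b
    have h1 := (hqb (ψ a) (ψ b)).2
    have u1 := hH.dist_triangle (u := a) (v := φ (ψ a)) (w := b)
    have u2 := hH.dist_triangle (u := φ (ψ a)) (v := φ (ψ b)) (w := b)
    have t1 : (H.dist a b : ℝ) ≤
        (H.dist a (φ (ψ a)) : ℝ) + ((H.dist (φ (ψ a)) (φ (ψ b)) : ℝ) + (H.dist (φ (ψ b)) b : ℝ)) := by
      exact_mod_cast le_trans u1 (by omega)
    have hdaa : (H.dist a (φ (ψ a)) : ℝ) ≤ c := hψ a
    have hdbb : (H.dist (φ (ψ b)) b : ℝ) ≤ c := by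
      have e : H.dist (φ (ψ b)) b = H.dist b (φ (ψ b)) := SimpleGraph.dist_comm
      rw [e]; exact hψ b
    linarith
  have nat_up : ∀ a b : W, G.dist (ψ a) (ψ b) ≤ Γ * H.dist a b + Cu := by
    intro a b
    have h1 := fact_up a b
    have hg1 : γ * (H.dist a b : ℝ) ≤ (Γ : ℝ) * H.dist a b :=
      mul_le_mul_of_nonneg_right (Nat.le_ceil γ) (Nat.cast_nonneg _)
    have hg2 : 3 * γ * c ≤ (Cu : ℝ) := Nat.le_ceil _
    have h2 : (G.dist (ψ a) (ψ b) : ℝ) ≤ ((Γ * H.dist a b + Cu : ℕ) : ℝ) := by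
      push_cast
      linarith
    exact_mod_cast h2
  have nat_low : ∀ a b : W, H.dist a b ≤ Γ * G.dist (ψ a) (ψ b) + C₂ := by
    intro a b
    have h1 := fact_low a b
    have hg1 : γ * (G.dist (ψ a) (ψ b) : ℝ) ≤ (Γ : ℝ) * G.dist (ψ a) (ψ b) :=
      mul_le_mul_of_nonneg_right (Nat.le_ceil γ) (Nat.cast_nonneg _)
    have hg2 : 3 * c ≤ (C₂ : ℝ) := Nat.le_ceil _
    have h2 : (H.dist a b : ℝ) ≤ ((Γ * G.dist (ψ a) (ψ b) + C₂ : ℕ) : ℝ) := by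
      push_cast
      linarith
    exact_mod_cast h2
  have side : ∀ (a b : W) (P : H.Walk a b), P.length = H.dist a b →
      ∃ g : G.Walk (ψ a) (ψ b), g.length = G.dist (ψ a) (ψ b) ∧
        (∀ u ∈ g.support, ∃ i, i ≤ P.length ∧ G.dist u (ψ (P.getVert i)) ≤ D₀) ∧
        (∀ i, i ≤ P.length → ∃ u ∈ g.support, G.dist (ψ (P.getVert i)) u ≤ D₁) := by
    intro a b P hP
    set q : ℕ → V := fun t => ψ (P.getVert t) with hqdef
    have hgeo : ∀ i j, i ≤ j → j ≤ P.length →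
        H.dist (P.getVert i) (P.getVert j) = j - i := fun i j hij hj =>
      QIH.geodesic_getVert_dist hH P hP i j hij hj
    have hlowq : ∀ i j, i ≤ j → j ≤ P.length → j - i ≤ Γ * G.dist (q i) (q j) + C₂ := by
      intro i j hij hj
      have h1 := nat_low (P.getVert i) (P.getVert j)
      rw [hgeo i j hij hj] at h1
      exact h1
    have hupq : ∀ i j, i ≤ j → j ≤ P.length → G.dist (q i) (q j) ≤ Γ * (j - i) + Cu := by
      intro i j hij hj
      have h1 := nat_up (P.getVert i) (P.getVert j)
      rw [hgeo i j hij hj] at h1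
      exact h1
    have hstepq : ∀ i, i < P.length → G.dist (q i) (q (i + 1)) ≤ S := by
      intro i hi
      have h1 := hupq i (i + 1) (by omega) (by omega)
      have e : i + 1 - i = 1 := by omega
      rw [e, Nat.mul_one] at h1
      omega
    obtain ⟨g, hg⟩ := hG.exists_walk_length_eq_dist (q 0) (q P.length)
    have he0 : q 0 = ψ a := by rw [hqdef]; simp only [Walk.getVert_zero]
    have heL : q P.length = ψ b := by rw [hqdef]; simp only [Walk.getVert_length]
    have hm1 := QIH.morse1 hG hδ hypG (Nat.le_ceil δ) q P.length hlowq hstepq g hg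
    have hm2 := QIH.morse2 hG q P.length hupq hlowq g hg hm1
    refine ⟨g.copy he0 heL, ?_, ?_, ?_⟩
    · rw [Walk.length_copy, hg, he0, heL]
    · intro u hu
      rw [Walk.support_copy] at hu
      obtain ⟨i, hi, hd⟩ := hm1 u hu
      exact ⟨i, hi, hd⟩
    · intro i hi
      rw [Walk.support_copy]
      obtain ⟨u, hu, hd⟩ := hm2 i hi
      exact ⟨u, hu, hd⟩
  constructor
  · rw [hΔeq]
    have h1 : (0 : ℝ) ≤ (D₁ : ℝ) + δ + (D₀ : ℝ) :=
      add_nonneg (add_nonneg (Nat.cast_nonneg _) hδ) (Nat.cast_nonneg _)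
    have h2 : (0 : ℝ) ≤ γ * ((D₁ : ℝ) + δ + (D₀ : ℝ)) := mul_nonneg (le_of_lt hγ0) h1
    linarith
  · intro x y z p1 p2 p3 h1 h2 h3 v hv
    obtain ⟨gxy, hgxy, hA1, hB1⟩ := side x y p1 h1
    obtain ⟨gyz, hgyz, hA2, _⟩ := side y z p2 h2
    obtain ⟨gxz, hgxz, hA3, _⟩ := side x z p3 h3
    obtain ⟨t, htv, htle⟩ := Walk.mem_support_iff_exists_getVert.mp hv
    obtain ⟨u, hu, hdu⟩ := hB1 t htle
    obtain ⟨w', hw'or, hw'δ⟩ := hypG (ψ x) (ψ y) (ψ z) gxy gyz gxz hgxy hgyz hgxz u hu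
    have key : ∀ (a b : W) (P : H.Walk a b), (∀ u' ∈ P.support, True) → True := fun _ _ _ _ => trivial
    rcases hw'or with hw' | hw'
    · obtain ⟨i2, hi2, hd2⟩ := hA2 w' hw'
      refine ⟨p2.getVert i2,
        Or.inl (Walk.mem_support_iff_exists_getVert.mpr ⟨i2, rfl, hi2⟩), ?_⟩
      have t1 := hG.dist_triangle (u := ψ v) (v := u) (w := ψ (p2.getVert i2))
      have t2 := hG.dist_triangle (u := u) (v := w') (w := ψ (p2.getVert i2))
      have c1 : (G.dist (ψ v) (ψ (p2.getVert i2)) : ℝ) ≤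
          (G.dist (ψ v) u : ℝ) + ((G.dist u w' : ℝ) + (G.dist w' (ψ (p2.getVert i2)) : ℝ)) := by
        exact_mod_cast le_trans t1 (by omega)
      have c2 : (G.dist (ψ v) u : ℝ) ≤ (D₁ : ℝ) := by exact_mod_cast htv ▸ hdu
      have c3 : (G.dist w' (ψ (p2.getVert i2)) : ℝ) ≤ (D₀ : ℝ) := by exact_mod_cast hd2
      have hGd : (G.dist (ψ v) (ψ (p2.getVert i2)) : ℝ) ≤ (D₁ : ℝ) + δ + (D₀ : ℝ) := by
        linarith
      have hfl := fact_low v (p2.getVert i2)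
      have hmono : γ * (G.dist (ψ v) (ψ (p2.getVert i2)) : ℝ) ≤
          γ * ((D₁ : ℝ) + δ + (D₀ : ℝ)) := mul_le_mul_of_nonneg_left hGd (le_of_lt hγ0)
      rw [hΔeq]
      linarith
    · obtain ⟨i3, hi3, hd3⟩ := hA3 w' hw'
      refine ⟨p3.getVert i3,
        Or.inr (Walk.mem_support_iff_exists_getVert.mpr ⟨i3, rfl, hi3⟩), ?_⟩
      have t1 := hG.dist_triangle (u := ψ v) (v := u) (w := ψ (p3.getVert i3))
      have t2 := hG.dist_triangle (u := u) (v := w') (w := ψ (p3.getVert i3))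
      have c1 : (G.dist (ψ v) (ψ (p3.getVert i3)) : ℝ) ≤
          (G.dist (ψ v) u : ℝ) + ((G.dist u w' : ℝ) + (G.dist w' (ψ (p3.getVert i3)) : ℝ)) := by
        exact_mod_cast le_trans t1 (by omega)
      have c2 : (G.dist (ψ v) u : ℝ) ≤ (D₁ : ℝ) := by exact_mod_cast htv ▸ hdu
      have c3 : (G.dist w' (ψ (p3.getVert i3)) : ℝ) ≤ (D₀ : ℝ) := by exact_mod_cast hd3
      have hGd : (G.dist (ψ v) (ψ (p3.getVert i3)) : ℝ) ≤ (D₁ : ℝ) + δ + (D₀ : ℝ) := by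
        linarith
      have hfl := fact_low v (p3.getVert i3)
      have hmono : γ * (G.dist (ψ v) (ψ (p3.getVert i3)) : ℝ) ≤
          γ * ((D₁ : ℝ) + δ + (D₀ : ℝ)) := mul_le_mul_of_nonneg_left hGd (le_of_lt hγ0)
      rw [hΔeq]
      linarith
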